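/- arXiv:math/0404353 — 3 statements merged into one kernel-verified Lean document; each statement's English description precedes it below -/
import Mathlib

section
/- Let η_1, η_2 be compositions and γ_1 ∈ ℤ^{|η_1|}, γ_2 ∈ ℤ^{|η_2|}, each summing to zero. Then the parabolic q-Kostant partition function is multiplicative under concatenation: K_{Φ(η_1 * η_2)}(γ_1 * γ_2 | q) = K_{Φ(η_1)}(γ_1 | q) · K_{Φ(η_2)}(γ_2 | q), where * denotes concatenation. -/
open scoped Classical

noncomputable section

/-- Partial sum `S η r = η_1 + ⋯ + η_r`. -/
def S (η : List ℕ) (r : ℕ) : ℕ := (η.take r).sum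

/-- The set `Φ(η)` of pairs (0-indexed) `(i,j)` with `i < S η r ≤ j` for some `1 ≤ r ≤ l(η)`. -/
def Phi (η : List ℕ) : Finset (ℕ × ℕ) :=
  (Finset.range η.sum ×ˢ Finset.range η.sum).filter
    (fun p => ∃ r ∈ Finset.Icc 1 η.length, p.1 < S η r ∧ S η r ≤ p.2)

/-- Coefficient of `q^d` in the parabolic `q`-Kostant partition function `K_{Φ(η)}(γ|q)`:
the number of non-negative integer arrays supported on `Φ(η)` with net row sums `γ`
and total sum of entries `d`. -/
def KCoeff (η : List ℕ) (γ : ℕ → ℤ) (d : ℕ) : ℕ :=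
  Nat.card {m : ℕ × ℕ → ℕ //
    (∀ p, p ∉ Phi η → m p = 0) ∧
    (∀ i ∈ Finset.range η.sum,
      (∑ j ∈ Finset.range η.sum, (m (i, j) : ℤ)) -
        (∑ j ∈ Finset.range η.sum, (m (j, i) : ℤ)) = γ i) ∧
    (∑ p ∈ Phi η, m p) = d}

/-- The parabolic Kostant partition function `K_{Φ(η)}(γ)` (value at `q = 1`). -/
def KNum (η : List ℕ) (γ : ℕ → ℤ) : ℕ :=
  Nat.card {m : ℕ × ℕ → ℕ //
    (∀ p, p ∉ Phi η → m p = 0) ∧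
    (∀ i ∈ Finset.range η.sum,
      (∑ j ∈ Finset.range η.sum, (m (i, j) : ℤ)) -
        (∑ j ∈ Finset.range η.sum, (m (j, i) : ℤ)) = γ i)}

/-- Coefficient of `q^d` in the parabolic Kostka polynomial
`K_{λμη}(q) = Σ_w (−1)^{ℓ(w)} K_{Φ(η)}(w(λ+δ) − μ − δ | q)`, where `δ = (n−1,…,1,0)`. -/
def ParKostkaCoeff (η : List ℕ) (lam mu : ℕ → ℤ) (d : ℕ) : ℤ :=
  ∑ w : Equiv.Perm (Fin η.sum),
    (Equiv.Perm.sign w : ℤ) *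
      (KCoeff η
        (fun i =>
          (if h : i < η.sum then
              lam ((w⁻¹ ⟨i, h⟩ : Fin η.sum) : ℕ) +
                ((η.sum : ℤ) - 1 - ((w⁻¹ ⟨i, h⟩ : Fin η.sum) : ℕ))
            else 0) - mu i - ((η.sum : ℤ) - 1 - i)) d : ℤ)

/-- The parabolic Kostka number `K_{λμη}(1)`. -/
def ParKostkaNum (η : List ℕ) (lam mu : ℕ → ℤ) : ℤ :=
  ∑ w : Equiv.Perm (Fin η.sum),
    (Equiv.Perm.sign w : ℤ) *
      (KNum η
        (fun i =>
          (if h : i < η.sum then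
              lam ((w⁻¹ ⟨i, h⟩ : Fin η.sum) : ℕ) +
                ((η.sum : ℤ) - 1 - ((w⁻¹ ⟨i, h⟩ : Fin η.sum) : ℕ))
            else 0) - mu i - ((η.sum : ℤ) - 1 - i)) : ℤ)

end

noncomputable section AuxStmt2

lemma S_le (η : List ℕ) (r : ℕ) : S η r ≤ η.sum := by
  rw [← List.sum_take_add_sum_drop η r]; exact Nat.le_add_right _ _

lemma S_append (η₁ η₂ : List ℕ) (r : ℕ) :
    S (η₁ ++ η₂) r = S η₁ r + S η₂ (r - η₁.length) := by
  simp [S, List.take_append]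

lemma S_of_length_le {η : List ℕ} {r : ℕ} (h : η.length ≤ r) : S η r = η.sum := by
  simp [S, List.take_of_length_le h]

lemma mem_Phi {η : List ℕ} {p : ℕ × ℕ} :
    p ∈ Phi η ↔ (p.1 < η.sum ∧ p.2 < η.sum) ∧
      ∃ r, (1 ≤ r ∧ r ≤ η.length) ∧ p.1 < S η r ∧ S η r ≤ p.2 := by
  simp [Phi, Finset.mem_filter, Finset.mem_product, Finset.mem_Icc, and_assoc]

lemma Phi_lt {η : List ℕ} {p : ℕ × ℕ} (h : p ∈ Phi η) : p.1 < η.sum ∧ p.2 < η.sum :=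
  (mem_Phi.mp h).1

lemma mem_Phi_append {η₁ η₂ : List ℕ} {p : ℕ × ℕ} :
    p ∈ Phi (η₁ ++ η₂) ↔
      p ∈ Phi η₁ ∨
      (p.1 < η₁.sum ∧ η₁.sum ≤ p.2 ∧ p.2 < η₁.sum + η₂.sum) ∨
      (η₁.sum ≤ p.1 ∧ η₁.sum ≤ p.2 ∧ (p.1 - η₁.sum, p.2 - η₁.sum) ∈ Phi η₂) := by
  constructor
  · intro h
    obtain ⟨⟨hp1, hp2⟩, r, ⟨hr1, hr2⟩, hlt, hle⟩ := mem_Phi.mp h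
    rw [List.sum_append] at hp1 hp2
    rw [List.length_append] at hr2
    by_cases hc2 : p.2 < η₁.sum
    · left
      have hrl : r ≤ η₁.length := by
        by_contra hcon
        have h1 : η₁.length ≤ r := by omega
        have h2 := S_append η₁ η₂ r
        have h3 : S η₁ r = η₁.sum := S_of_length_le h1
        omega
      have hS : S (η₁ ++ η₂) r = S η₁ r := by
        rw [S_append, Nat.sub_eq_zero_of_le hrl]
        simp [S]
      have hb := S_le η₁ r
      exact mem_Phi.mpr ⟨⟨by omega, by omega⟩, r, ⟨hr1, hrl⟩, by omega, by omega⟩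
    · by_cases hc1 : p.1 < η₁.sum
      · right; left; omega
      · right; right
        have hrg : η₁.length < r := by
          by_contra hcon
          have hrl : r ≤ η₁.length := by omega
          have hS : S (η₁ ++ η₂) r = S η₁ r := by
            rw [S_append, Nat.sub_eq_zero_of_le hrl]
            simp [S]
          have hb := S_le η₁ r
          omega
        have hS : S (η₁ ++ η₂) r = η₁.sum + S η₂ (r - η₁.length) := by
          rw [S_append, S_of_length_le (by omega : η₁.length ≤ r)]
        refine ⟨by omega, by omega, mem_Phi.mpr ⟨⟨by omega, by omega⟩,
          r - η₁.length, ⟨by omega, by omega⟩, by omega, by omega⟩⟩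
  · rintro (h | h | h)
    · obtain ⟨⟨hp1, hp2⟩, r, ⟨hr1, hr2⟩, hlt, hle⟩ := mem_Phi.mp h
      have hS : S (η₁ ++ η₂) r = S η₁ r := by
        rw [S_append, Nat.sub_eq_zero_of_le hr2]
        simp [S]
      refine mem_Phi.mpr ⟨⟨?_, ?_⟩, r, ⟨hr1, ?_⟩, by omega, by omega⟩ <;>
        simp [List.sum_append, List.length_append] <;> omega
    · obtain ⟨h1, h2, h3⟩ := h
      have hne : η₁.length ≥ 1 := by
        rcases η₁ with _ | ⟨x, l⟩
        · simp at h1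
        · simp
      have hS : S (η₁ ++ η₂) η₁.length = η₁.sum := by
        rw [S_append, Nat.sub_self]
        simp [S, S_of_length_le (le_refl η₁.length)]
      refine mem_Phi.mpr ⟨⟨?_, ?_⟩, η₁.length, ⟨hne, ?_⟩, by omega, by omega⟩ <;>
        simp [List.sum_append, List.length_append] <;> omega
    · obtain ⟨h1, h2, h3⟩ := h
      obtain ⟨⟨hp1, hp2⟩, s, ⟨hs1, hs2⟩, hlt, hle⟩ := mem_Phi.mp h3
      simp only at hp1 hp2 hlt hle
      have hS : S (η₁ ++ η₂) (η₁.length + s) = η₁.sum + S η₂ s := by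
        rw [S_append, S_of_length_le (Nat.le_add_right _ _), Nat.add_sub_cancel_left]
      refine mem_Phi.mpr ⟨⟨?_, ?_⟩, η₁.length + s, ⟨by omega, ?_⟩, by omega, by omega⟩ <;>
        simp [List.sum_append, List.length_append] <;> omega

-- chunk 2
lemma Phi_subset (η : List ℕ) : Phi η ⊆ Finset.range η.sum ×ˢ Finset.range η.sum := by
  intro p hp
  simp only [Phi, Finset.mem_filter] at hp
  exact hp.1

lemma not_mem_left {η₁ η₂ : List ℕ} {p : ℕ × ℕ} (h1 : p.1 < η₁.sum) (h2 : p.2 < η₁.sum)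
    (h : p ∉ Phi η₁) : p ∉ Phi (η₁ ++ η₂) := by
  intro hc
  rcases mem_Phi_append.mp hc with hA | hB | hC
  · exact h hA
  · omega
  · omega

lemma not_mem_cross' {η₁ η₂ : List ℕ} {p : ℕ × ℕ} (h1 : η₁.sum ≤ p.1) (h2 : p.2 < η₁.sum) :
    p ∉ Phi (η₁ ++ η₂) := by
  intro hc
  rcases mem_Phi_append.mp hc with hA | hB | hC
  · exact absurd (Phi_lt hA).1 (by omega)
  · omega
  · omega

lemma not_mem_right {η₁ η₂ : List ℕ} {p : ℕ × ℕ} (h1 : η₁.sum ≤ p.1) (h2 : η₁.sum ≤ p.2)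
    (h : (p.1 - η₁.sum, p.2 - η₁.sum) ∉ Phi η₂) : p ∉ Phi (η₁ ++ η₂) := by
  intro hc
  rcases mem_Phi_append.mp hc with hA | hB | hC
  · exact absurd (Phi_lt hA).1 (by omega)
  · omega
  · exact h hC.2.2

abbrev T (η : List ℕ) (γ : ℕ → ℤ) (d : ℕ) : Type :=
  {m : ℕ × ℕ → ℕ //
    (∀ p, p ∉ Phi η → m p = 0) ∧
    (∀ i ∈ Finset.range η.sum,
      (∑ j ∈ Finset.range η.sum, (m (i, j) : ℤ)) -
        (∑ j ∈ Finset.range η.sum, (m (j, i) : ℤ)) = γ i) ∧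
    (∑ p ∈ Phi η, m p) = d}

instance T_finite (η : List ℕ) (γ : ℕ → ℤ) (d : ℕ) : Finite (T η γ d) := by
  apply Finite.of_injective
    (fun m : T η γ d => fun p : {p // p ∈ Phi η} =>
      (⟨m.1 p.1, by
        have := Finset.single_le_sum (f := m.1) (fun i _ => Nat.zero_le _) p.2
        omega⟩ : Fin (d + 1)))
  intro m m' hmm
  ext p
  by_cases hp : p ∈ Phi η
  · have := congrFun hmm ⟨p, hp⟩
    simpa using congrArg Fin.val this
  · rw [m.2.1 p hp, m'.2.1 p hp]

lemma my_card_sigma {ι : Type} [Fintype ι] (f : ι → Type) [∀ i, Finite (f i)] :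
    Nat.card (Σ i, f i) = ∑ i, Nat.card (f i) := by
  letI : ∀ i, Fintype (f i) := fun i => Fintype.ofFinite _
  simp [Nat.card_eq_fintype_card]

-- chunk 3
lemma row1 {η₁ η₂ : List ℕ} (m : ℕ × ℕ → ℕ)
    (hcross : ∀ i j, i < η₁.sum → η₁.sum ≤ j → m (i, j) = 0)
    {i : ℕ} (hi : i < η₁.sum) :
    (∑ j ∈ Finset.range ((η₁ ++ η₂).sum), (m (i, j) : ℤ)) =
      ∑ j ∈ Finset.range η₁.sum, (m (i, j) : ℤ) := by
  rw [List.sum_append, Finset.sum_range_add]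
  have h0 : ∑ j ∈ Finset.range η₂.sum, (m (i, η₁.sum + j) : ℤ) = 0 :=
    Finset.sum_eq_zero fun j _ => by rw [hcross i _ hi (Nat.le_add_right _ _)]; norm_num
  rw [h0, add_zero]

lemma col1 {η₁ η₂ : List ℕ} (m : ℕ × ℕ → ℕ)
    (hsupp : ∀ p, p ∉ Phi (η₁ ++ η₂) → m p = 0)
    {i : ℕ} (hi : i < η₁.sum) :
    (∑ j ∈ Finset.range ((η₁ ++ η₂).sum), (m (j, i) : ℤ)) =
      ∑ j ∈ Finset.range η₁.sum, (m (j, i) : ℤ) := by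
  rw [List.sum_append, Finset.sum_range_add]
  have h0 : ∑ j ∈ Finset.range η₂.sum, (m (η₁.sum + j, i) : ℤ) = 0 :=
    Finset.sum_eq_zero fun j _ => by
      rw [hsupp _ (not_mem_cross' (Nat.le_add_right _ _) hi)]; norm_num
  rw [h0, add_zero]

lemma row2 {η₁ η₂ : List ℕ} (m : ℕ × ℕ → ℕ)
    (hsupp : ∀ p, p ∉ Phi (η₁ ++ η₂) → m p = 0)
    {i : ℕ} (hi : η₁.sum ≤ i) :
    (∑ j ∈ Finset.range ((η₁ ++ η₂).sum), (m (i, j) : ℤ)) =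
      ∑ j ∈ Finset.range η₂.sum, (m (i, η₁.sum + j) : ℤ) := by
  rw [List.sum_append, Finset.sum_range_add]
  have h0 : ∑ j ∈ Finset.range η₁.sum, (m (i, j) : ℤ) = 0 :=
    Finset.sum_eq_zero fun j hj => by
      rw [hsupp _ (not_mem_cross' hi (Finset.mem_range.mp hj))]; norm_num
  rw [h0, zero_add]

lemma col2 {η₁ η₂ : List ℕ} (m : ℕ × ℕ → ℕ)
    (hcross : ∀ i j, i < η₁.sum → η₁.sum ≤ j → m (i, j) = 0)
    {i : ℕ} (hi : η₁.sum ≤ i) :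
    (∑ j ∈ Finset.range ((η₁ ++ η₂).sum), (m (j, i) : ℤ)) =
      ∑ j ∈ Finset.range η₂.sum, (m (η₁.sum + j, i) : ℤ) := by
  rw [List.sum_append, Finset.sum_range_add]
  have h0 : ∑ j ∈ Finset.range η₁.sum, (m (j, i) : ℤ) = 0 :=
    Finset.sum_eq_zero fun j hj => by
      rw [hcross j i (Finset.mem_range.mp hj) hi]; norm_num
  rw [h0, zero_add]

lemma cross_zero {η₁ η₂ : List ℕ} (γ₁ γ₂ : ℕ → ℤ)
    (h₁ : ∑ i ∈ Finset.range η₁.sum, γ₁ i = 0)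
    (m : ℕ × ℕ → ℕ) (hsupp : ∀ p, p ∉ Phi (η₁ ++ η₂) → m p = 0)
    (hrow : ∀ i ∈ Finset.range (η₁ ++ η₂).sum,
      (∑ j ∈ Finset.range (η₁ ++ η₂).sum, (m (i, j) : ℤ)) -
        (∑ j ∈ Finset.range (η₁ ++ η₂).sum, (m (j, i) : ℤ)) =
        (if i < η₁.sum then γ₁ i else γ₂ (i - η₁.sum))) :
    ∀ i j, i < η₁.sum → η₁.sum ≤ j → m (i, j) = 0 := by
  have key : ∑ i ∈ Finset.range η₁.sum,
      ∑ j ∈ Finset.range η₂.sum, (m (i, η₁.sum + j) : ℤ) = 0 := by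
    have h2 : ∑ i ∈ Finset.range η₁.sum,
        ((∑ j ∈ Finset.range (η₁ ++ η₂).sum, (m (i, j) : ℤ)) -
          ∑ j ∈ Finset.range (η₁ ++ η₂).sum, (m (j, i) : ℤ)) = 0 := by
      rw [← h₁]
      refine Finset.sum_congr rfl fun i hi => ?_
      rw [Finset.mem_range] at hi
      rw [hrow i (by rw [Finset.mem_range, List.sum_append]; omega), if_pos hi]
    have h4 : ∑ i ∈ Finset.range η₁.sum,
        (((∑ j ∈ Finset.range η₁.sum, (m (i, j) : ℤ)) -
          ∑ j ∈ Finset.range η₁.sum, (m (j, i) : ℤ)) +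
          ∑ j ∈ Finset.range η₂.sum, (m (i, η₁.sum + j) : ℤ)) = 0 := by
      rw [← h2]
      refine Finset.sum_congr rfl fun i hi => ?_
      rw [Finset.mem_range] at hi
      rw [List.sum_append, Finset.sum_range_add, Finset.sum_range_add]
      have h0 : ∑ j ∈ Finset.range η₂.sum, (m (η₁.sum + j, i) : ℤ) = 0 :=
        Finset.sum_eq_zero fun j _ => by
          rw [hsupp _ (not_mem_cross' (Nat.le_add_right _ _) hi)]; norm_num
      rw [h0, add_zero]
      ring
    rw [Finset.sum_add_distrib, Finset.sum_sub_distrib, Finset.sum_comm, sub_self,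
      zero_add] at h4
    exact h4
  intro i j hi hj
  by_cases hjn : j < η₁.sum + η₂.sum
  · have h5 := (Finset.sum_eq_zero_iff_of_nonneg
      (fun i _ => Finset.sum_nonneg fun j _ => Int.natCast_nonneg _)).mp key i
      (Finset.mem_range.mpr hi)
    have h6 := (Finset.sum_eq_zero_iff_of_nonneg
      (fun j _ => Int.natCast_nonneg _)).mp h5 (j - η₁.sum)
      (Finset.mem_range.mpr (by omega))
    have h7 : η₁.sum + (j - η₁.sum) = j := by omega
    rw [h7] at h6
    exact_mod_cast h6
  · exact hsupp _ (fun hc => absurd (Phi_lt hc).2 (by rw [List.sum_append]; omega))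

lemma sum_Phi_split {η₁ η₂ : List ℕ} (m : ℕ × ℕ → ℕ)
    (hsupp : ∀ p, p ∉ Phi (η₁ ++ η₂) → m p = 0)
    (hcross : ∀ i j, i < η₁.sum → η₁.sum ≤ j → m (i, j) = 0) :
    ∑ p ∈ Phi (η₁ ++ η₂), m p =
      (∑ p ∈ Phi η₁, m p) + ∑ p ∈ Phi η₂, m (η₁.sum + p.1, η₁.sum + p.2) := by
  calc ∑ p ∈ Phi (η₁ ++ η₂), m p
      = ∑ i ∈ Finset.range (η₁.sum + η₂.sum),
          ∑ j ∈ Finset.range (η₁.sum + η₂.sum), m (i, j) := by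
        rw [Finset.sum_subset (Phi_subset _) (fun p _ hp => hsupp p hp),
          Finset.sum_product, List.sum_append]
    _ = (∑ i ∈ Finset.range η₁.sum, ∑ j ∈ Finset.range (η₁.sum + η₂.sum), m (i, j))
        + ∑ i ∈ Finset.range η₂.sum,
            ∑ j ∈ Finset.range (η₁.sum + η₂.sum), m (η₁.sum + i, j) :=
        Finset.sum_range_add _ _ _
    _ = (∑ i ∈ Finset.range η₁.sum, ∑ j ∈ Finset.range η₁.sum, m (i, j))
        + ∑ i ∈ Finset.range η₂.sum,
            ∑ j ∈ Finset.range η₂.sum, m (η₁.sum + i, η₁.sum + j) := by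
        congr 1
        · refine Finset.sum_congr rfl fun i hi => ?_
          rw [Finset.sum_range_add,
            Finset.sum_eq_zero
              (fun j _ => hcross i _ (Finset.mem_range.mp hi) (Nat.le_add_right _ _)),
            add_zero]
        · refine Finset.sum_congr rfl fun i hi => ?_
          rw [Finset.sum_range_add,
            Finset.sum_eq_zero
              (fun j hj => hsupp _
                (not_mem_cross' (Nat.le_add_right _ _) (Finset.mem_range.mp hj))),
            zero_add]
    _ = (∑ p ∈ Phi η₁, m p) + ∑ p ∈ Phi η₂, m (η₁.sum + p.1, η₁.sum + p.2) := by
        congr 1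
        · rw [Finset.sum_subset (Phi_subset η₁) (fun p hp hnp => hsupp p
            (not_mem_left (Finset.mem_range.mp (Finset.mem_product.mp hp).1)
              (Finset.mem_range.mp (Finset.mem_product.mp hp).2) hnp)),
            Finset.sum_product]
        · rw [Finset.sum_subset (Phi_subset η₂) (fun p hp hnp => hsupp _
            (not_mem_right (Nat.le_add_right _ _) (Nat.le_add_right _ _)
              (by simpa using hnp))),
            Finset.sum_product]

-- chunk 4
abbrev gc (η₁ : List ℕ) (γ₁ γ₂ : ℕ → ℤ) : ℕ → ℤ :=
  fun i => if i < η₁.sum then γ₁ i else γ₂ (i - η₁.sum)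

def restr1 (η₁ : List ℕ) (m : ℕ × ℕ → ℕ) : ℕ × ℕ → ℕ :=
  fun p => if p ∈ Phi η₁ then m p else 0

def restr2 (n₁ : ℕ) (η₂ : List ℕ) (m : ℕ × ℕ → ℕ) : ℕ × ℕ → ℕ :=
  fun p => if p ∈ Phi η₂ then m (n₁ + p.1, n₁ + p.2) else 0

def glue (n₁ : ℕ) (m₁ m₂ : ℕ × ℕ → ℕ) : ℕ × ℕ → ℕ := fun p =>
  if p.1 < n₁ ∧ p.2 < n₁ then m₁ p
  else if n₁ ≤ p.1 ∧ n₁ ≤ p.2 then m₂ (p.1 - n₁, p.2 - n₁) else 0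

section Maps
variable {η₁ η₂ : List ℕ} {γ₁ γ₂ : ℕ → ℤ} {d : ℕ}

lemma m_cross (h₁ : ∑ i ∈ Finset.range η₁.sum, γ₁ i = 0)
    (m : T (η₁ ++ η₂) (gc η₁ γ₁ γ₂) d) :
    ∀ i j, i < η₁.sum → η₁.sum ≤ j → m.1 (i, j) = 0 :=
  cross_zero γ₁ γ₂ h₁ m.1 m.2.1 m.2.2.1

lemma fwd_total (h₁ : ∑ i ∈ Finset.range η₁.sum, γ₁ i = 0)
    (m : T (η₁ ++ η₂) (gc η₁ γ₁ γ₂) d) :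
    (∑ p ∈ Phi η₁, m.1 p) +
      (∑ p ∈ Phi η₂, m.1 (η₁.sum + p.1, η₁.sum + p.2)) = d := by
  rw [← sum_Phi_split m.1 m.2.1 (m_cross h₁ m)]
  exact m.2.2.2

noncomputable def Fwd1 (h₁ : ∑ i ∈ Finset.range η₁.sum, γ₁ i = 0)
    (m : T (η₁ ++ η₂) (gc η₁ γ₁ γ₂) d) :
    T η₁ γ₁ (∑ p ∈ Phi η₁, m.1 p) := by
  refine ⟨restr1 η₁ m.1, fun p hp => by rw [restr1, if_neg hp], fun i hi => ?_, ?_⟩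
  · rw [Finset.mem_range] at hi
    have e1 : ∀ j ∈ Finset.range η₁.sum,
        ((restr1 η₁ m.1 (i, j) : ℤ)) = (m.1 (i, j) : ℤ) := fun j hj => by
      rw [restr1]
      by_cases h : (i, j) ∈ Phi η₁
      · rw [if_pos h]
      · rw [if_neg h, m.2.1 _ (not_mem_left hi (Finset.mem_range.mp hj) h)]
    have e2 : ∀ j ∈ Finset.range η₁.sum,
        ((restr1 η₁ m.1 (j, i) : ℤ)) = (m.1 (j, i) : ℤ) := fun j hj => by
      rw [restr1]
      by_cases h : (j, i) ∈ Phi η₁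
      · rw [if_pos h]
      · rw [if_neg h, m.2.1 _ (not_mem_left (Finset.mem_range.mp hj) hi h)]
    rw [Finset.sum_congr rfl e1, Finset.sum_congr rfl e2,
      ← row1 m.1 (m_cross h₁ m) hi, ← col1 m.1 m.2.1 hi]
    have hcond := m.2.2.1 i (by rw [Finset.mem_range, List.sum_append]; omega)
    simp only [gc] at hcond
    rw [if_pos hi] at hcond
    exact hcond
  · exact Finset.sum_congr rfl fun p hp => by rw [restr1, if_pos hp]

noncomputable def Fwd2 (h₁ : ∑ i ∈ Finset.range η₁.sum, γ₁ i = 0)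
    (m : T (η₁ ++ η₂) (gc η₁ γ₁ γ₂) d) :
    T η₂ γ₂ (d - ∑ p ∈ Phi η₁, m.1 p) := by
  refine ⟨restr2 η₁.sum η₂ m.1, fun p hp => by rw [restr2, if_neg hp], fun i hi => ?_, ?_⟩
  · rw [Finset.mem_range] at hi
    have e1 : ∀ j ∈ Finset.range η₂.sum,
        ((restr2 η₁.sum η₂ m.1 (i, j) : ℤ)) = (m.1 (η₁.sum + i, η₁.sum + j) : ℤ) :=
      fun j hj => by
        rw [restr2]
        by_cases h : (i, j) ∈ Phi η₂
        · rw [if_pos h]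
        · rw [if_neg h, m.2.1 _ (not_mem_right (Nat.le_add_right _ _) (Nat.le_add_right _ _)
            (by simpa using h))]
    have e2 : ∀ j ∈ Finset.range η₂.sum,
        ((restr2 η₁.sum η₂ m.1 (j, i) : ℤ)) = (m.1 (η₁.sum + j, η₁.sum + i) : ℤ) :=
      fun j hj => by
        rw [restr2]
        by_cases h : (j, i) ∈ Phi η₂
        · rw [if_pos h]
        · rw [if_neg h, m.2.1 _ (not_mem_right (Nat.le_add_right _ _) (Nat.le_add_right _ _)
            (by simpa using h))]
    rw [Finset.sum_congr rfl e1, Finset.sum_congr rfl e2,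
      ← row2 m.1 m.2.1 (Nat.le_add_right _ _),
      ← col2 m.1 (m_cross h₁ m) (Nat.le_add_right _ _)]
    have hcond := m.2.2.1 (η₁.sum + i) (by rw [Finset.mem_range, List.sum_append]; omega)
    simp only [gc] at hcond
    rw [if_neg (show ¬ η₁.sum + i < η₁.sum by omega), Nat.add_sub_cancel_left] at hcond
    exact hcond
  · rw [Finset.sum_congr rfl (fun p (hp : p ∈ Phi η₂) => by rw [restr2, if_pos hp])]
    have := fwd_total h₁ m
    omega

noncomputable def Bwd (m₁ : T η₁ γ₁ a) (m₂ : T η₂ γ₂ b) (hab : a + b = d) :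
    T (η₁ ++ η₂) (gc η₁ γ₁ γ₂) d := by
  refine ⟨glue η₁.sum m₁.1 m₂.1, fun p hp => ?_, fun i hi => ?_, ?_⟩
  · rw [glue]
    by_cases hc1 : p.1 < η₁.sum ∧ p.2 < η₁.sum
    · rw [if_pos hc1]
      refine m₁.2.1 p fun hmem => hp ?_
      exact mem_Phi_append.mpr (Or.inl hmem)
    · rw [if_neg hc1]
      by_cases hc2 : η₁.sum ≤ p.1 ∧ η₁.sum ≤ p.2
      · rw [if_pos hc2]
        refine m₂.2.1 _ fun hmem => hp ?_
        exact mem_Phi_append.mpr (Or.inr (Or.inr ⟨hc2.1, hc2.2, hmem⟩))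
      · rw [if_neg hc2]
  · rw [Finset.mem_range, List.sum_append] at hi
    by_cases hil : i < η₁.sum
    · have e1 : ∀ j, j < η₁.sum → glue η₁.sum m₁.1 m₂.1 (i, j) = m₁.1 (i, j) := fun j hj => by
        rw [glue, if_pos ⟨hil, hj⟩]
      have e2 : ∀ j, glue η₁.sum m₁.1 m₂.1 (i, η₁.sum + j) = 0 := fun j => by
        rw [glue, if_neg (by omega), if_neg (by omega)]
      have e3 : ∀ j, j < η₁.sum → glue η₁.sum m₁.1 m₂.1 (j, i) = m₁.1 (j, i) := fun j hj => by
        rw [glue, if_pos ⟨hj, hil⟩]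
      have e4 : ∀ j, glue η₁.sum m₁.1 m₂.1 (η₁.sum + j, i) = 0 := fun j => by
        rw [glue, if_neg (by omega), if_neg (by omega)]
      rw [List.sum_append, Finset.sum_range_add, Finset.sum_range_add]
      simp only [e2, e4, Nat.cast_zero, Finset.sum_const_zero, add_zero]
      rw [show ∑ j ∈ Finset.range η₁.sum, ((glue η₁.sum m₁.1 m₂.1 (i, j) : ℕ) : ℤ) =
            ∑ j ∈ Finset.range η₁.sum, (m₁.1 (i, j) : ℤ) from
          Finset.sum_congr rfl fun j hj => by rw [e1 j (Finset.mem_range.mp hj)],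
        show ∑ j ∈ Finset.range η₁.sum, ((glue η₁.sum m₁.1 m₂.1 (j, i) : ℕ) : ℤ) =
            ∑ j ∈ Finset.range η₁.sum, (m₁.1 (j, i) : ℤ) from
          Finset.sum_congr rfl fun j hj => by rw [e3 j (Finset.mem_range.mp hj)]]
      simp only [gc]
      rw [if_pos hil]
      exact m₁.2.2.1 i (Finset.mem_range.mpr hil)
    · have e1 : ∀ j, j < η₁.sum → glue η₁.sum m₁.1 m₂.1 (i, j) = 0 := fun j hj => by
        rw [glue, if_neg (by omega), if_neg (by omega)]
      have e2 : ∀ j, glue η₁.sum m₁.1 m₂.1 (i, η₁.sum + j) = m₂.1 (i - η₁.sum, j) := fun j => by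
        rw [glue, if_neg (by omega), if_pos ⟨by omega, by omega⟩]
        congr 1
        simp only [Nat.add_sub_cancel_left]
      have e3 : ∀ j, j < η₁.sum → glue η₁.sum m₁.1 m₂.1 (j, i) = 0 := fun j hj => by
        rw [glue, if_neg (by omega), if_neg (by omega)]
      have e4 : ∀ j, glue η₁.sum m₁.1 m₂.1 (η₁.sum + j, i) = m₂.1 (j, i - η₁.sum) := fun j => by
        rw [glue, if_neg (by omega), if_pos ⟨by omega, by omega⟩]
        congr 1
        simp only [Nat.add_sub_cancel_left]
      rw [List.sum_append, Finset.sum_range_add, Finset.sum_range_add]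
      rw [show ∑ j ∈ Finset.range η₁.sum, ((glue η₁.sum m₁.1 m₂.1 (i, j) : ℕ) : ℤ) =
            ∑ j ∈ Finset.range η₁.sum, ((0 : ℕ) : ℤ) from
          Finset.sum_congr rfl fun j hj => by rw [e1 j (Finset.mem_range.mp hj)],
        show ∑ j ∈ Finset.range η₁.sum, ((glue η₁.sum m₁.1 m₂.1 (j, i) : ℕ) : ℤ) =
            ∑ j ∈ Finset.range η₁.sum, ((0 : ℕ) : ℤ) from
          Finset.sum_congr rfl fun j hj => by rw [e3 j (Finset.mem_range.mp hj)]]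
      simp only [e2, e4, Nat.cast_zero, Finset.sum_const_zero, zero_add]
      simp only [gc]
      rw [if_neg hil]
      exact m₂.2.2.1 (i - η₁.sum) (Finset.mem_range.mpr (by omega))
  · have gcross : ∀ i j, i < η₁.sum → η₁.sum ≤ j → glue η₁.sum m₁.1 m₂.1 (i, j) = 0 :=
      fun i j hi hj => by rw [glue, if_neg (by omega), if_neg (by omega)]
    have gsupp : ∀ p, p ∉ Phi (η₁ ++ η₂) → glue η₁.sum m₁.1 m₂.1 p = 0 := by
      intro p hp
      rw [glue]
      by_cases hc1 : p.1 < η₁.sum ∧ p.2 < η₁.sum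
      · rw [if_pos hc1]
        exact m₁.2.1 p fun hmem => hp (mem_Phi_append.mpr (Or.inl hmem))
      · rw [if_neg hc1]
        by_cases hc2 : η₁.sum ≤ p.1 ∧ η₁.sum ≤ p.2
        · rw [if_pos hc2]
          exact m₂.2.1 _ fun hmem =>
            hp (mem_Phi_append.mpr (Or.inr (Or.inr ⟨hc2.1, hc2.2, hmem⟩)))
        · rw [if_neg hc2]
    rw [sum_Phi_split _ gsupp gcross]
    have ea : ∑ p ∈ Phi η₁, glue η₁.sum m₁.1 m₂.1 p = a := by
      rw [Finset.sum_congr rfl (fun p hp => by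
        rw [glue, if_pos ⟨(Phi_lt hp).1, (Phi_lt hp).2⟩])]
      exact m₁.2.2.2
    have eb : ∑ p ∈ Phi η₂, glue η₁.sum m₁.1 m₂.1 (η₁.sum + p.1, η₁.sum + p.2) = b := by
      have e : ∀ p ∈ Phi η₂,
          glue η₁.sum m₁.1 m₂.1 (η₁.sum + p.1, η₁.sum + p.2) = m₂.1 p := by
        intro p hp
        rw [glue, if_neg (by omega), if_pos ⟨Nat.le_add_right _ _, Nat.le_add_right _ _⟩]
        simp
      rw [Finset.sum_congr rfl e]
      exact m₂.2.2.2
    rw [ea, eb, hab]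

noncomputable def fwd (h₁ : ∑ i ∈ Finset.range η₁.sum, γ₁ i = 0)
    (m : T (η₁ ++ η₂) (gc η₁ γ₁ γ₂) d) :
    Σ a : Fin (d + 1), T η₁ γ₁ a × T η₂ γ₂ (d - a) :=
  ⟨⟨∑ p ∈ Phi η₁, m.1 p, by have := fwd_total h₁ m; omega⟩, (Fwd1 h₁ m, Fwd2 h₁ m)⟩

noncomputable def bwd (x : Σ a : Fin (d + 1), T η₁ γ₁ a × T η₂ γ₂ (d - a)) :
    T (η₁ ++ η₂) (gc η₁ γ₁ γ₂) d :=
  Bwd x.2.1 x.2.2 (by have := x.1.isLt; omega)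

lemma glue_sum1 {a b : ℕ} (m₁ : T η₁ γ₁ a) (m₂ : T η₂ γ₂ b) :
    ∑ p ∈ Phi η₁, glue η₁.sum m₁.1 m₂.1 p = a := by
  rw [Finset.sum_congr rfl (fun p hp => by
    rw [glue, if_pos ⟨(Phi_lt hp).1, (Phi_lt hp).2⟩])]
  exact m₁.2.2.2

lemma glue_restr1 {a b : ℕ} (m₁ : T η₁ γ₁ a) (m₂ : T η₂ γ₂ b) :
    restr1 η₁ (glue η₁.sum m₁.1 m₂.1) = m₁.1 := by
  funext p
  rw [restr1]
  by_cases h : p ∈ Phi η₁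
  · rw [if_pos h, glue, if_pos ⟨(Phi_lt h).1, (Phi_lt h).2⟩]
  · rw [if_neg h]
    exact (m₁.2.1 p h).symm

lemma glue_restr2 {a b : ℕ} (m₁ : T η₁ γ₁ a) (m₂ : T η₂ γ₂ b) :
    restr2 η₁.sum η₂ (glue η₁.sum m₁.1 m₂.1) = m₂.1 := by
  funext p
  rw [restr2]
  by_cases h : p ∈ Phi η₂
  · rw [if_pos h, glue, if_neg (by omega),
      if_pos ⟨Nat.le_add_right _ _, Nat.le_add_right _ _⟩]
    simp
  · rw [if_neg h]
    exact (m₂.2.1 p h).symm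

lemma bwd_fwd (h₁ : ∑ i ∈ Finset.range η₁.sum, γ₁ i = 0) :
    ∀ m : T (η₁ ++ η₂) (gc η₁ γ₁ γ₂) d, bwd (fwd h₁ m) = m := by
  intro m
  apply Subtype.ext
  show glue η₁.sum (restr1 η₁ m.1) (restr2 η₁.sum η₂ m.1) = m.1
  funext p
  have hcross := m_cross h₁ m
  by_cases h1 : p.1 < η₁.sum <;> by_cases h2 : p.2 < η₁.sum
  · rw [glue, if_pos ⟨h1, h2⟩, restr1]
    by_cases h : p ∈ Phi η₁
    · rw [if_pos h]
    · rw [if_neg h]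
      exact (m.2.1 p (not_mem_left h1 h2 h)).symm
  · rw [glue, if_neg (by omega), if_neg (by omega)]
    exact (hcross p.1 p.2 h1 (by omega)).symm
  · rw [glue, if_neg (by omega), if_neg (by omega)]
    exact (m.2.1 p (not_mem_cross' (by omega) h2)).symm
  · rw [glue, if_neg (by omega), if_pos ⟨by omega, by omega⟩, restr2]
    by_cases h : (p.1 - η₁.sum, p.2 - η₁.sum) ∈ Phi η₂
    · rw [if_pos h]
      have hp : (η₁.sum + (p.1 - η₁.sum, p.2 - η₁.sum).1,
          η₁.sum + (p.1 - η₁.sum, p.2 - η₁.sum).2) = p := by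
        obtain ⟨x, y⟩ := p
        simp only [Prod.mk.injEq]
        constructor <;> omega
      rw [hp]
    · rw [if_neg h]
      exact (m.2.1 p (not_mem_right (by omega) (by omega) h)).symm

lemma prod_heq {n n' b b' : ℕ}
    (hn : n = n') (hb : b = b')
    (x : T η₁ γ₁ n × T η₂ γ₂ b) (y : T η₁ γ₁ n' × T η₂ γ₂ b')
    (h1 : x.1.1 = y.1.1) (h2 : x.2.1 = y.2.1) : HEq x y := by
  subst hn; subst hb
  exact heq_of_eq (Prod.ext (Subtype.ext h1) (Subtype.ext h2))

lemma fwd_bwd (h₁ : ∑ i ∈ Finset.range η₁.sum, γ₁ i = 0) :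
    ∀ x : Σ a : Fin (d + 1), T η₁ γ₁ a × T η₂ γ₂ (d - a), fwd h₁ (bwd x) = x := by
  rintro ⟨a, m₁, m₂⟩
  have hval : (∑ p ∈ Phi η₁, glue η₁.sum m₁.1 m₂.1 p) = ↑a := glue_sum1 m₁ m₂
  refine Sigma.ext (Fin.ext hval) ?_
  exact prod_heq hval
    (show d - (∑ p ∈ Phi η₁, glue η₁.sum m₁.1 m₂.1 p) = d - (a : ℕ) by rw [hval])
    _ _ (glue_restr1 m₁ m₂) (glue_restr2 m₁ m₂)

end Maps


end AuxStmt2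

/-- Multiplicativity of the parabolic `q`-Kostant partition function under
concatenation: `K_{Φ(η₁*η₂)}(γ₁*γ₂|q) = K_{Φ(η₁)}(γ₁|q) · K_{Φ(η₂)}(γ₂|q)`,
stated coefficient-wise in `q`. -/

theorem stmt2 (η₁ η₂ : List ℕ) (γ₁ γ₂ : ℕ → ℤ)
    (h₁ : ∑ i ∈ Finset.range η₁.sum, γ₁ i = 0)
    (h₂ : ∑ i ∈ Finset.range η₂.sum, γ₂ i = 0) (d : ℕ) :
    KCoeff (η₁ ++ η₂) (fun i => if i < η₁.sum then γ₁ i else γ₂ (i - η₁.sum)) d =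
      ∑ a ∈ Finset.range (d + 1), KCoeff η₁ γ₁ a * KCoeff η₂ γ₂ (d - a) := by
  have key : Nat.card (T (η₁ ++ η₂) (gc η₁ γ₁ γ₂) d) =
      ∑ a ∈ Finset.range (d + 1), Nat.card (T η₁ γ₁ a) * Nat.card (T η₂ γ₂ (d - a)) := by
    have E : T (η₁ ++ η₂) (gc η₁ γ₁ γ₂) d ≃
        Σ a : Fin (d + 1), T η₁ γ₁ a × T η₂ γ₂ (d - a) :=
      ⟨fwd h₁, bwd, bwd_fwd h₁, fwd_bwd h₁⟩
    rw [Nat.card_congr E, my_card_sigma]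
    simp only [Nat.card_prod]
    exact Fin.sum_univ_eq_sum_range
      (fun a => Nat.card (T η₁ γ₁ a) * Nat.card (T η₂ γ₂ (d - a))) (d + 1)
  exact key
end

section
/- If γ = (γ_1, γ_2, γ_3, γ_4) ∈ ℤ⁴ with Σγ_i = 0, γ_1 ≥ 0, γ_2 ≥ 0, γ_3 ≥ 0, then the Kostant partition function for sl_4 equals K_{Φ(1⁴)}(γ) = C(γ_1+3, 3) + γ_2 · C(γ_1+2, 2), where C(n,k) denotes the binomial coefficient. -/
open scoped Classical

lemma mem_phi (p : ℕ × ℕ) : p ∈ Phi [1,1,1,1] ↔ p.1 < p.2 ∧ p.2 < 4 := by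
  obtain ⟨i, j⟩ := p
  simp only [Phi, Finset.mem_filter, Finset.mem_product, Finset.mem_range, Finset.mem_Icc]
  constructor
  · rintro ⟨⟨hi, hj⟩, r, ⟨hr1, hr2⟩, h1, h2⟩
    simp only [List.sum_cons, List.sum_nil, List.length] at hj hr2 ⊢
    interval_cases r <;> simp [S] at h1 h2 <;> omega
  · rintro ⟨h1, h2⟩
    have hi3 : i < 3 := by omega
    refine ⟨⟨by simp; omega, by simp; omega⟩, i+1, ⟨by omega, by simp; omega⟩, ?_, ?_⟩ <;>
      · interval_cases i <;> simp [S] <;> omega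

lemma hsum (n b : ℕ) : ∑ k ∈ Finset.range n, (b + k + 1) = n * (b + 1) + n.choose 2 := by
  induction n with
  | zero => simp
  | succ n ih =>
    rw [Finset.sum_range_succ, ih, Nat.choose_succ_succ n 1, Nat.choose_one_right]
    ring

lemma gsum (a b : ℕ) : ∑ k ∈ Finset.range (a+1), (a+1-k)*(b+k+1)
    = (a+3).choose 3 + b * (a+2).choose 2 := by
  induction a with
  | zero => simp [Nat.choose]; ring
  | succ a ih =>
    have step : ∑ k ∈ Finset.range (a+2), (a+2-k)*(b+k+1)
        = ∑ k ∈ Finset.range (a+2), ((a+1-k)*(b+k+1) + (b+k+1)) := by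
      refine Finset.sum_congr rfl fun k hk => ?_
      rw [Finset.mem_range] at hk
      have : a + 2 - k = (a + 1 - k) + 1 := by omega
      rw [this]; ring
    rw [step, Finset.sum_add_distrib, hsum, Finset.sum_range_succ]
    simp only [Nat.sub_self, zero_mul, add_zero, ih]
    have e1 : (a+1+3).choose 3 = (a+3).choose 3 + (a+3).choose 2 := by
      rw [show a+1+3 = (a+3)+1 from rfl, Nat.choose_succ_succ (a+3) 2]; ring
    have e2 : (a+3).choose 2 = (a+2).choose 2 + (a+2) := by
      rw [show a+3 = (a+2)+1 from rfl, Nat.choose_succ_succ (a+2) 1, Nat.choose_one_right]; ring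
    rw [e1, show a+1+2 = a+3 from rfl, e2]
    ring

noncomputable def mk (a b c k x y : ℕ) : ℕ × ℕ → ℕ := fun p =>
  if p = (0,1) then k else if p = (0,2) then x else if p = (0,3) then a - k - x
  else if p = (1,2) then y else if p = (1,3) then b + k - y
  else if p = (2,3) then c + x + y else 0


/-- For `γ ∈ ℤ⁴` with `Σγ_i = 0` and `γ_1, γ_2, γ_3 ≥ 0`, the Kostant
partition function for `sl₄` equals `K_{Φ(1⁴)}(γ) = C(γ_1+3,3) + γ_2·C(γ_1+2,2)`. -/
theorem stmt6 (γ : ℕ → ℤ) (h0 : γ 0 + γ 1 + γ 2 + γ 3 = 0)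
    (h1 : 0 ≤ γ 0) (h2 : 0 ≤ γ 1) (h3 : 0 ≤ γ 2) :
    KNum [1, 1, 1, 1] γ =
      Nat.choose ((γ 0).toNat + 3) 3 + (γ 1).toNat * Nat.choose ((γ 0).toNat + 2) 2 := by
  have hga : γ 0 = ((γ 0).toNat : ℤ) := (Int.toNat_of_nonneg h1).symm
  have hgb : γ 1 = ((γ 1).toNat : ℤ) := (Int.toNat_of_nonneg h2).symm
  have hgc : γ 2 = ((γ 2).toNat : ℤ) := (Int.toNat_of_nonneg h3).symm
  set a := (γ 0).toNat with ha
  set b := (γ 1).toNat with hb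
  set c := (γ 2).toNat with hc
  have hgd : γ 3 = -((a : ℤ) + b + c) := by omega
  set F : Finset (Σ _ : ℕ, ℕ × ℕ) :=
    (Finset.range (a+1)).sigma (fun k => Finset.range (a+1-k) ×ˢ Finset.range (b+k+1)) with hF
  have hsum4 : ([1,1,1,1] : List ℕ).sum = 4 := rfl
  have z : ∀ m : ℕ × ℕ → ℕ, (∀ p, p ∉ Phi [1,1,1,1] → m p = 0) →
      ∀ i j : ℕ, ¬(i < j ∧ j < 4) → m (i, j) = 0 := by
    intro m hs i j h
    exact hs _ (by rw [mem_phi]; exact h)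
  -- extraction of the three equations
  have extract : ∀ m : ℕ × ℕ → ℕ, (∀ p, p ∉ Phi [1,1,1,1] → m p = 0) →
      (∀ i ∈ Finset.range ([1,1,1,1] : List ℕ).sum,
        (∑ j ∈ Finset.range ([1,1,1,1] : List ℕ).sum, (m (i, j) : ℤ)) -
          (∑ j ∈ Finset.range ([1,1,1,1] : List ℕ).sum, (m (j, i) : ℤ)) = γ i) →
      m (0,1) + m (0,2) + m (0,3) = a ∧
      m (1,2) + m (1,3) = b + m (0,1) ∧
      m (2,3) = c + m (0,2) + m (1,2) := by
    intro m hs hrow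
    have e0 := hrow 0 (by norm_num [hsum4])
    have e1 := hrow 1 (by norm_num [hsum4])
    have e2 := hrow 2 (by norm_num [hsum4])
    simp only [hsum4, Finset.sum_range_succ, Finset.sum_range_zero] at e0 e1 e2
    simp only [z m hs 0 0 (by omega), z m hs 1 0 (by omega), z m hs 2 0 (by omega),
        z m hs 3 0 (by omega), z m hs 1 1 (by omega), z m hs 2 1 (by omega),
        z m hs 3 1 (by omega), z m hs 2 2 (by omega),
        z m hs 3 2 (by omega), Nat.cast_zero] at e0 e1 e2
    rw [hga] at e0
    rw [hgb] at e1
    rw [hgc] at e2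
    push_cast at e0 e1 e2
    omega
  have hmemF : ∀ x : Σ _ : ℕ, ℕ × ℕ,
      x ∈ F ↔ x.1 + x.2.1 ≤ a ∧ x.2.2 ≤ b + x.1 := by
    rintro ⟨k, x, y⟩
    simp only [hF, Finset.mem_sigma, Finset.mem_product, Finset.mem_range]
    omega
  have card_eq : KNum [1,1,1,1] γ = F.card := by
    rw [KNum, ← Nat.card_eq_finsetCard]
    refine Nat.card_congr ?_
    refine
      { toFun := fun m => ⟨⟨m.1 (0,1), m.1 (0,2), m.1 (1,2)⟩, ?_⟩
        invFun := fun x => ⟨mk a b c x.1.1 x.1.2.1 x.1.2.2, ?_, ?_⟩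
        left_inv := ?_
        right_inv := ?_ }
    · obtain ⟨m, hs, hrow⟩ := m
      obtain ⟨q0, q1, q2⟩ := extract m hs hrow
      rw [hmemF]
      dsimp only
      exact ⟨by omega, by omega⟩
    · -- support condition
      intro p hp
      have n1 : p ≠ (0,1) := by rintro rfl; exact hp (by rw [mem_phi]; omega)
      have n2 : p ≠ (0,2) := by rintro rfl; exact hp (by rw [mem_phi]; omega)
      have n3 : p ≠ (0,3) := by rintro rfl; exact hp (by rw [mem_phi]; omega)
      have n4 : p ≠ (1,2) := by rintro rfl; exact hp (by rw [mem_phi]; omega)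
      have n5 : p ≠ (1,3) := by rintro rfl; exact hp (by rw [mem_phi]; omega)
      have n6 : p ≠ (2,3) := by rintro rfl; exact hp (by rw [mem_phi]; omega)
      simp only [mk, if_neg n1, if_neg n2, if_neg n3, if_neg n4, if_neg n5, if_neg n6]
    · -- row equations
      obtain ⟨⟨k, x, y⟩, hx⟩ := x
      rw [hmemF] at hx
      dsimp only at hx
      obtain ⟨hx1, hx2⟩ := hx
      intro i hi
      simp only [hsum4, Finset.mem_range] at hi
      interval_cases i <;>
        · norm_num [hsum4, Finset.sum_range_succ, mk]
          omega
    · rintro ⟨m, hs, hrow⟩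
      obtain ⟨q0, q1, q2⟩ := extract m hs hrow
      ext p
      obtain ⟨i, j⟩ := p
      by_cases hp : (i, j) ∈ Phi [1,1,1,1]
      · rw [mem_phi] at hp
        obtain ⟨hij, hj4⟩ := hp
        have hi3 : i < 3 := by omega
        interval_cases i <;> interval_cases j <;> norm_num [mk] <;> omega
      · have h0' := hs _ hp
        rw [mem_phi] at hp
        push_neg at hp
        simp only [mk, h0']
        rw [if_neg (by rintro h; injection h with h1 h2; omega),
            if_neg (by rintro h; injection h with h1 h2; omega),
            if_neg (by rintro h; injection h with h1 h2; omega),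
            if_neg (by rintro h; injection h with h1 h2; omega),
            if_neg (by rintro h; injection h with h1 h2; omega),
            if_neg (by rintro h; injection h with h1 h2; omega)]
    · rintro ⟨⟨k, x, y⟩, hx⟩
      rw [hmemF] at hx
      dsimp only at hx
      apply Subtype.ext
      simp only []
      norm_num [mk]
  rw [card_eq, hF, Finset.card_sigma]
  simp only [Finset.card_product, Finset.card_range]
  exact gsum a b
end

section
/- Let η be a composition of size n and γ ∈ ℤ^n with Σγ_i = 0. Then K_{Φ(η)}(γ | q) ≠ 0 if and only if γ ∈ Y_η, that is, for each 0 ≤ k ≤ p−1 and every subset Ω of the (k+1)-st block {r_k+1, …, r_k+η_{k+1}}, one has Σ_{j=1}^{r_k} γ_j + Σ_{a∈Ω} γ_a ≥ 0 (with r_k = η_1+⋯+η_k, r_0 = 0). -/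
open scoped Classical

section StmtNine

lemma S_zero (η : List ℕ) : S η 0 = 0 := rfl

lemma S_mono (η : List ℕ) : Monotone (S η) := by
  intro a b hab
  have h : η.take b = η.take a ++ (η.drop a).take (b - a) := by
    rw [← List.take_add]; congr 1; omega
  simp only [S, h, List.sum_append]
  exact Nat.le_add_right _ _

lemma S_le_sum (η : List ℕ) (k : ℕ) : S η k ≤ η.sum := by
  have : η.sum = (η.take k).sum + (η.drop k).sum := by
    conv_lhs => rw [← List.take_append_drop k η]
    rw [List.sum_append]
  rw [S, this]; omega

lemma S_length (η : List ℕ) : S η η.length = η.sum := by simp [S]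

lemma lt_of_S_lt_S (η : List ℕ) {a b : ℕ} (h : S η a < S η b) : a < b := by
  by_contra hc
  exact absurd (S_mono η (not_lt.mp hc)) (not_le.mpr h)

lemma exists_block (η : List ℕ) {j : ℕ} (hj : j < η.sum) :
    ∃ k < η.length, S η k ≤ j ∧ j < S η (k + 1) := by
  classical
  set F := (Finset.range (η.length + 1)).filter (fun k => S η k ≤ j) with hF
  have h0 : (0 : ℕ) ∈ F := by simp [hF, S_zero]
  have hne : F.Nonempty := ⟨0, h0⟩
  set k := F.max' hne with hk
  have hkF : k ∈ F := F.max'_mem hne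
  have hk1 : k ∈ Finset.range (η.length + 1) := (Finset.mem_filter.mp hkF).1
  have hk2 : S η k ≤ j := (Finset.mem_filter.mp hkF).2
  have hklen : k < η.length := by
    rcases lt_or_eq_of_le (Nat.lt_succ_iff.mp (Finset.mem_range.mp hk1)) with h | h
    · exact h
    · exfalso; rw [h, S_length] at hk2; omega
  refine ⟨k, hklen, hk2, ?_⟩
  by_contra hc
  push_neg at hc
  have : k + 1 ∈ F := by
    simp only [hF, Finset.mem_filter, Finset.mem_range]
    exact ⟨by omega, hc⟩
  have := F.le_max' _ this
  omega

lemma forward (η : List ℕ) (γ : ℕ → ℤ) (m : ℕ × ℕ → ℕ)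
    (hm0 : ∀ p, p ∉ Phi η → m p = 0)
    (hdiv : ∀ i ∈ Finset.range η.sum,
      (∑ j ∈ Finset.range η.sum, (m (i, j) : ℤ)) -
        (∑ j ∈ Finset.range η.sum, (m (j, i) : ℤ)) = γ i) :
    ∀ k < η.length, ∀ Ω ⊆ Finset.Ico (S η k) (S η (k + 1)),
      0 ≤ (∑ j ∈ Finset.range (S η k), γ j) + ∑ a ∈ Ω, γ a := by
  intro k hk Ω hΩ
  set n := η.sum with hn
  set A : Finset ℕ := Finset.range (S η k) ∪ Ω with hA
  have hdisj : Disjoint (Finset.range (S η k)) Ω := by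
    rw [Finset.disjoint_left]
    intro a ha haΩ
    have h1 := (Finset.mem_Ico.mp (hΩ haΩ)).1
    have h2 := Finset.mem_range.mp ha
    omega
  have hsub : A ⊆ Finset.range n := by
    intro a ha
    rcases Finset.mem_union.mp ha with h | h
    · have h1 := Finset.mem_range.mp h
      have h2 := S_le_sum η k
      exact Finset.mem_range.mpr (by omega)
    · have h2 := (Finset.mem_Ico.mp (hΩ h)).2
      have h3 : S η (k + 1) ≤ n := S_le_sum η (k + 1)
      exact Finset.mem_range.mpr (by omega)
  set B : Finset ℕ := Finset.range n \ A with hB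
  have hAB : A ∪ B = Finset.range n := Finset.union_sdiff_of_subset hsub
  have hABdisj : Disjoint A B := Finset.disjoint_sdiff
  have hkey : ∀ q ∈ A, ∀ r ∈ B, m (r, q) = 0 := by
    intro q hq r hr
    by_contra hne
    have hrA : r ∉ A := (Finset.mem_sdiff.mp hr).2
    have hΦ : (r, q) ∈ Phi η := by
      by_contra h; exact hne (hm0 _ h)
    simp only [Phi, Finset.mem_filter] at hΦ
    obtain ⟨s, hs, h1, h2⟩ := hΦ.2
    have hrlt : r < S η k := by
      rcases Finset.mem_union.mp hq with h | h
      · have h3 := Finset.mem_range.mp h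
        omega
      · have hq2 := Finset.mem_Ico.mp (hΩ h)
        have hsk : s ≤ k := by
          have h4 : S η s < S η (k + 1) := lt_of_le_of_lt h2 hq2.2
          have := lt_of_S_lt_S η h4; omega
        have := S_mono η hsk
        omega
    exact hrA (Finset.mem_union_left _ (Finset.mem_range.mpr hrlt))
  have hsum : (∑ j ∈ Finset.range (S η k), γ j) + ∑ a ∈ Ω, γ a = ∑ i ∈ A, γ i :=
    (Finset.sum_union hdisj).symm
  rw [hsum]
  have hAdiv : ∑ i ∈ A, γ i =
      ∑ i ∈ A, ((∑ j ∈ Finset.range n, (m (i, j) : ℤ)) -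
        ∑ j ∈ Finset.range n, (m (j, i) : ℤ)) :=
    Finset.sum_congr rfl fun i hi => (hdiv i (hsub hi)).symm
  have hsplit : ∀ g : ℕ → ℤ, ∑ j ∈ Finset.range n, g j = ∑ j ∈ A, g j + ∑ j ∈ B, g j := by
    intro g; rw [← hAB, Finset.sum_union hABdisj]
  rw [hAdiv, Finset.sum_sub_distrib]
  have e1 : ∑ i ∈ A, ∑ j ∈ Finset.range n, (m (i, j) : ℤ) =
      ∑ i ∈ A, ∑ j ∈ A, (m (i, j) : ℤ) + ∑ i ∈ A, ∑ j ∈ B, (m (i, j) : ℤ) := by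
    rw [← Finset.sum_add_distrib]
    exact Finset.sum_congr rfl fun i _ => hsplit _
  have e2 : ∑ i ∈ A, ∑ j ∈ Finset.range n, (m (j, i) : ℤ) =
      ∑ i ∈ A, ∑ j ∈ A, (m (j, i) : ℤ) + ∑ i ∈ A, ∑ j ∈ B, (m (j, i) : ℤ) := by
    rw [← Finset.sum_add_distrib]
    exact Finset.sum_congr rfl fun i _ => hsplit _
  have e3 : ∑ i ∈ A, ∑ j ∈ A, (m (j, i) : ℤ) = ∑ i ∈ A, ∑ j ∈ A, (m (i, j) : ℤ) :=
    Finset.sum_comm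
  have e4 : ∑ i ∈ A, ∑ j ∈ B, (m (j, i) : ℤ) = 0 := by
    refine Finset.sum_eq_zero fun i hi => Finset.sum_eq_zero fun j hj => ?_
    rw [hkey i hi j hj]; rfl
  rw [e1, e2, e3, e4]
  have : (0:ℤ) ≤ ∑ i ∈ A, ∑ j ∈ B, (m (i, j) : ℤ) :=
    Finset.sum_nonneg fun i _ => Finset.sum_nonneg fun j _ => Int.natCast_nonneg _
  linarith

lemma backward (η : List ℕ) :
    ∀ N (γ : ℕ → ℤ), (∑ i ∈ Finset.range η.sum, (γ i).natAbs) = N →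
      (∑ i ∈ Finset.range η.sum, γ i) = 0 →
      (∀ k < η.length, ∀ Ω ⊆ Finset.Ico (S η k) (S η (k + 1)),
        0 ≤ (∑ j ∈ Finset.range (S η k), γ j) + ∑ a ∈ Ω, γ a) →
      ∃ m : ℕ × ℕ → ℕ, (∀ p, p ∉ Phi η → m p = 0) ∧
        (∀ i ∈ Finset.range η.sum,
          (∑ j ∈ Finset.range η.sum, (m (i, j) : ℤ)) -
            (∑ j ∈ Finset.range η.sum, (m (j, i) : ℤ)) = γ i) := by
  intro N
  induction N using Nat.strong_induction_on with
  | _ N IH =>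
  intro γ hN h0 hY
  by_cases hN0 : N = 0
  · refine ⟨fun _ => 0, fun _ _ => rfl, fun i hi => ?_⟩
    have hz : (γ i).natAbs = 0 := by
      subst hN0
      have := (Finset.sum_eq_zero_iff.mp hN) i hi
      exact this
    simp only [Finset.sum_const_zero, Nat.cast_zero, sub_zero]
    omega
  -- main case
  set n := η.sum with hn
  have hex : ∃ i ∈ Finset.range n, γ i ≠ 0 := by
    by_contra h
    push_neg at h
    exact hN0 (by rw [← hN]; exact Finset.sum_eq_zero fun i hi => by rw [h i hi]; rfl)
  obtain ⟨i₀, hi₀n, hi₀⟩ := hex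
  -- top nonzero block c
  set C := (Finset.range η.length).filter
      (fun k => ∃ t ∈ Finset.Ico (S η k) (S η (k + 1)), γ t ≠ 0) with hC
  have hCne : C.Nonempty := by
    obtain ⟨k, hk, h1, h2⟩ := exists_block η (Finset.mem_range.mp hi₀n)
    exact ⟨k, by
      simp only [hC, Finset.mem_filter, Finset.mem_range]
      exact ⟨hk, i₀, Finset.mem_Ico.mpr ⟨h1, h2⟩, hi₀⟩⟩
  set c := C.max' hCne with hc
  have hcC : c ∈ C := C.max'_mem hCne
  have hcC' := hcC
  simp only [hC, Finset.mem_filter, Finset.mem_range] at hcC'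
  have hclen : c < η.length := hcC'.1
  have hzero : ∀ t, S η (c + 1) ≤ t → t < n → γ t = 0 := by
    intro t h1 h2
    obtain ⟨k, hk, hk1, hk2⟩ := exists_block η h2
    by_contra hne
    have hck : c < k := by
      have h3 : S η (c + 1) < S η (k + 1) := by omega
      have := lt_of_S_lt_S η h3; omega
    have hkC : k ∈ C := by
      simp only [hC, Finset.mem_filter, Finset.mem_range]
      exact ⟨hk, t, Finset.mem_Ico.mpr ⟨hk1, hk2⟩, hne⟩
    have := C.le_max' k hkC
    omega
  have hsub1 : Finset.range (S η (c + 1)) ⊆ Finset.range n := by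
    intro x hx
    have := S_le_sum η (c + 1)
    simp only [Finset.mem_range] at *
    omega
  have hsum_c1 : ∑ t ∈ Finset.range (S η (c + 1)), γ t = 0 := by
    rw [Finset.sum_subset hsub1 (fun x hx hnx => hzero x (by
      simp only [Finset.mem_range] at hnx; omega) (Finset.mem_range.mp hx))]
    exact h0
  have hsplit_c : ∑ t ∈ Finset.range (S η c), γ t +
      ∑ t ∈ Finset.Ico (S η c) (S η (c + 1)), γ t =
      ∑ t ∈ Finset.range (S η (c + 1)), γ t := by
    rw [Finset.range_eq_Ico, Finset.range_eq_Ico]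
    exact Finset.sum_Ico_consecutive γ (Nat.zero_le _) (S_mono η (Nat.le_succ c))
  have hcle : ∀ t ∈ Finset.Ico (S η c) (S η (c + 1)), γ t ≤ 0 := by
    intro t ht
    by_contra hp
    push_neg at hp
    have herase : γ t + ∑ x ∈ (Finset.Ico (S η c) (S η (c + 1))).erase t, γ x =
        ∑ x ∈ Finset.Ico (S η c) (S η (c + 1)), γ x := Finset.add_sum_erase _ γ ht
    have := hY c hclen _ (Finset.erase_subset t _)
    omega
  obtain ⟨j, hjmem, hjne⟩ : ∃ t ∈ Finset.Ico (S η c) (S η (c + 1)), γ t ≠ 0 := hcC'.2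
  have hjneg : γ j < 0 := lt_of_le_of_ne (hcle j hjmem) hjne
  have hIcoNeg : ∑ t ∈ Finset.Ico (S η c) (S η (c + 1)), γ t < 0 := by
    have herase : γ j + ∑ x ∈ (Finset.Ico (S η c) (S η (c + 1))).erase j, γ x =
        ∑ x ∈ Finset.Ico (S η c) (S η (c + 1)), γ x := Finset.add_sum_erase _ γ hjmem
    have hle : ∑ x ∈ (Finset.Ico (S η c) (S η (c + 1))).erase j, γ x ≤ 0 :=
      Finset.sum_nonpos fun x hx => hcle x (Finset.mem_of_mem_erase hx)
    omega
  have hposex : ∃ t ∈ Finset.range (S η c), 0 < γ t := by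
    by_contra h
    push_neg at h
    have : ∑ t ∈ Finset.range (S η c), γ t ≤ 0 := Finset.sum_nonpos h
    omega
  obtain ⟨i₁, hi₁mem, hi₁pos⟩ := hposex
  set B := (Finset.range η.length).filter
      (fun k => ∃ t ∈ Finset.Ico (S η k) (S η (k + 1)), 0 < γ t) with hB
  have hBne : B.Nonempty := by
    have hi₁n : i₁ < n := by
      have := Finset.mem_range.mp hi₁mem
      have := S_le_sum η c
      omega
    obtain ⟨k, hk, h1, h2⟩ := exists_block η hi₁n
    exact ⟨k, by
      simp only [hB, Finset.mem_filter, Finset.mem_range]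
      exact ⟨hk, i₁, Finset.mem_Ico.mpr ⟨h1, h2⟩, hi₁pos⟩⟩
  set b := B.max' hBne with hb
  have hbB : b ∈ B := B.max'_mem hBne
  have hbB' := hbB
  simp only [hB, Finset.mem_filter, Finset.mem_range] at hbB'
  have hblen : b < η.length := hbB'.1
  obtain ⟨i, himem, hipos⟩ : ∃ t ∈ Finset.Ico (S η b) (S η (b + 1)), 0 < γ t := hbB'.2
  have himem' := Finset.mem_Ico.mp himem
  have hjmem' := Finset.mem_Ico.mp hjmem
  have hin' : i < n := by
    have := S_le_sum η (b + 1); omega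
  have hjn' : j < n := by
    have := S_le_sum η (c + 1); omega
  have hnopos : ∀ t, S η (b + 1) ≤ t → t < n → γ t ≤ 0 := by
    intro t h1 h2
    obtain ⟨k, hk, hk1, hk2⟩ := exists_block η h2
    by_contra hne
    push_neg at hne
    have hbk : b < k := by
      have h3 : S η (b + 1) < S η (k + 1) := by omega
      have := lt_of_S_lt_S η h3; omega
    have hkB : k ∈ B := by
      simp only [hB, Finset.mem_filter, Finset.mem_range]
      exact ⟨hk, t, Finset.mem_Ico.mpr ⟨hk1, hk2⟩, hne⟩
    have := B.le_max' k hkB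
    omega
  have hbc : b < c := by
    by_contra hle
    push_neg at hle
    have hSc : S η c ≤ S η b := S_mono η hle
    by_cases hcase : i < S η (c + 1)
    · have := hcle i (Finset.mem_Ico.mpr ⟨by omega, hcase⟩)
      omega
    · have := hzero i (by omega) hin'
      omega
  have hSb1c : S η (b + 1) ≤ S η c := S_mono η hbc
  have hij : i < j := by omega
  have hΦij : (i, j) ∈ Phi η := by
    simp only [Phi, Finset.mem_filter, Finset.mem_product, Finset.mem_range, Finset.mem_Icc]
    exact ⟨⟨hin', hjn'⟩, b + 1, ⟨by omega, by omega⟩, himem'.2, by omega⟩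
  -- new gamma
  set γ' : ℕ → ℤ := fun t => γ t - (if t = i then 1 else 0) + (if t = j then 1 else 0)
    with hγ'
  have hγ'i : γ' i = γ i - 1 := by simp [hγ']; omega
  have hγ'j : γ' j = γ j + 1 := by simp [hγ']; omega
  have hγ'other : ∀ t, t ≠ i → t ≠ j → γ' t = γ t := by
    intro t h1 h2; simp [hγ', h1, h2]
  have hsumind : ∀ (s : Finset ℕ) (a : ℕ) (f : ℕ → ℤ),
      ∑ t ∈ s, (if t = a then f t else 0) = if a ∈ s then f a else 0 :=
    fun s a f => Finset.sum_ite_eq' s a f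
  have hin : i ∈ Finset.range n := Finset.mem_range.mpr hin'
  have hjn : j ∈ Finset.range n := Finset.mem_range.mpr hjn'
  have hsum' : ∑ t ∈ Finset.range n, γ' t = 0 := by
    simp only [hγ']
    rw [Finset.sum_add_distrib, Finset.sum_sub_distrib]
    rw [hsumind _ i (fun _ => (1:ℤ)), hsumind _ j (fun _ => (1:ℤ))]
    simp [hin, hjn, h0]
  -- decrease of measure
  have hjei : j ∈ (Finset.range n).erase i := Finset.mem_erase.mpr ⟨by omega, hjn⟩
  have hNdec : ∑ t ∈ Finset.range n, (γ' t).natAbs < N := by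
    have d1 : ∀ g : ℕ → ℕ, ∑ t ∈ Finset.range n, g t =
        g i + (g j + ∑ t ∈ ((Finset.range n).erase i).erase j, g t) := by
      intro g
      rw [Finset.add_sum_erase _ g hjei, Finset.add_sum_erase _ g hin]
    have dR : ∑ t ∈ ((Finset.range n).erase i).erase j, (γ' t).natAbs =
        ∑ t ∈ ((Finset.range n).erase i).erase j, (γ t).natAbs := by
      refine Finset.sum_congr rfl fun t ht => ?_
      have h1 := Finset.mem_erase.mp ht
      have h2 := Finset.mem_erase.mp h1.2
      rw [hγ'other t h2.1 h1.1]
    have e1 := d1 (fun t => (γ' t).natAbs)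
    have e2 := d1 (fun t => (γ t).natAbs)
    rw [dR] at e1
    rw [e2] at hN
    rw [e1, hγ'i, hγ'j]
    omega
  -- conditions for γ'
  have hY' : ∀ k < η.length, ∀ Ω ⊆ Finset.Ico (S η k) (S η (k + 1)),
      0 ≤ (∑ t ∈ Finset.range (S η k), γ' t) + ∑ a ∈ Ω, γ' a := by
    intro k hk Ω hΩ
    have hT := hY k hk Ω hΩ
    have expand : ∀ s : Finset ℕ, ∑ t ∈ s, γ' t =
        ∑ t ∈ s, γ t - (if i ∈ s then 1 else 0) + (if j ∈ s then 1 else 0) := by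
      intro s
      simp only [hγ']
      rw [Finset.sum_add_distrib, Finset.sum_sub_distrib]
      rw [hsumind s i (fun _ => (1:ℤ)), hsumind s j (fun _ => (1:ℤ))]
    rw [expand, expand]
    by_cases hiΩ : i ∈ Ω
    · -- i in Omega: use erase
      have hiR : i ∉ Finset.range (S η k) := by
        have := (Finset.mem_Ico.mp (hΩ hiΩ)).1
        simp only [Finset.mem_range]
        omega
      have herase : γ i + ∑ x ∈ Ω.erase i, γ x = ∑ x ∈ Ω, γ x :=
        Finset.add_sum_erase _ γ hiΩ
      have h2 := hY k hk (Ω.erase i) ((Finset.erase_subset i Ω).trans hΩ)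
      simp only [hiR, if_false, hiΩ, if_true]
      have c3 : (0:ℤ) ≤ (if j ∈ Finset.range (S η k) then (1:ℤ) else 0) := by positivity
      have c4 : (0:ℤ) ≤ (if j ∈ Ω then (1:ℤ) else 0) := by positivity
      omega
    · by_cases hiR : i ∈ Finset.range (S η k)
      · simp only [hiR, if_true, hiΩ, if_false]
        by_cases hjR : j ∈ Finset.range (S η k)
        · simp only [hjR, if_true]
          have c4 : (0:ℤ) ≤ (if j ∈ Ω then (1:ℤ) else 0) := by positivity
          omega
        · by_cases hjΩ : j ∈ Ω
          · simp only [hjR, if_false, hjΩ, if_true]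
            omega
          · simp only [hjR, if_false, hjΩ, if_false]
            -- need T >= 1
            have hiSk : i < S η k := Finset.mem_range.mp hiR
            have hjSk : S η k ≤ j := by
              by_contra h
              exact hjR (Finset.mem_range.mpr (by omega))
            by_cases hjlt : j < S η (k + 1)
            · -- insert j into Omega
              have hjmemk : j ∈ Finset.Ico (S η k) (S η (k + 1)) :=
                Finset.mem_Ico.mpr ⟨hjSk, hjlt⟩
              have h2 := hY k hk (insert j Ω) (Finset.insert_subset hjmemk hΩ)
              rw [Finset.sum_insert hjΩ] at h2
              omega
            · -- j beyond block k
              push_neg at hjlt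
              have hkc : k < c := by
                have h3 : S η (k + 1) < S η (c + 1) := by omega
                have := lt_of_S_lt_S η h3; omega
              have hSk1c : S η (k + 1) ≤ S η c := S_mono η hkc
              have hbk : b < k := by
                have h3 : S η b < S η k := by omega
                exact lt_of_S_lt_S η h3
              have hSb1k : S η (b + 1) ≤ S η k := S_mono η hbk
              have h2 := hY c hclen {j} (Finset.singleton_subset_iff.mpr hjmem)
              rw [Finset.sum_singleton] at h2
              have hsplitk : ∑ t ∈ Finset.range (S η k), γ t +
                  ∑ t ∈ Finset.Ico (S η k) (S η c), γ t =
                  ∑ t ∈ Finset.range (S η c), γ t := by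
                rw [Finset.range_eq_Ico, Finset.range_eq_Ico]
                exact Finset.sum_Ico_consecutive γ (Nat.zero_le _)
                  (le_trans (S_mono η (Nat.le_succ k)) hSk1c)
              have hΩsub : Ω ⊆ Finset.Ico (S η k) (S η c) := by
                intro x hx
                have := Finset.mem_Ico.mp (hΩ hx)
                exact Finset.mem_Ico.mpr ⟨this.1, by omega⟩
              have hsd : ∑ t ∈ Finset.Ico (S η k) (S η c) \ Ω, γ t +
                  ∑ t ∈ Ω, γ t = ∑ t ∈ Finset.Ico (S η k) (S η c), γ t :=
                Finset.sum_sdiff hΩsub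
              have hsdnp : ∑ t ∈ Finset.Ico (S η k) (S η c) \ Ω, γ t ≤ 0 := by
                refine Finset.sum_nonpos fun t ht => ?_
                have h4 := Finset.mem_Ico.mp (Finset.mem_sdiff.mp ht).1
                have h5 : S η c ≤ n := S_le_sum η c
                exact hnopos t (by omega) (by omega)
              omega
      · -- i not in A at all
        simp only [hiR, if_false, hiΩ, if_false]
        have c3 : (0:ℤ) ≤ (if j ∈ Finset.range (S η k) then (1:ℤ) else 0) := by positivity
        have c4 : (0:ℤ) ≤ (if j ∈ Ω then (1:ℤ) else 0) := by positivity
        omega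
  -- apply IH
  obtain ⟨m', hm'0, hm'div⟩ := IH _ hNdec γ' rfl hsum' hY'
  refine ⟨fun q => m' q + if q = (i, j) then 1 else 0, ?_, ?_⟩
  · intro q hq
    have h1 := hm'0 q hq
    have h2 : q ≠ (i, j) := fun h => hq (h ▸ hΦij)
    simp [h1, h2]
  · intro t ht
    have rowcast : ∀ t' j' : ℕ,
        ((m' (t', j') + if (t', j') = (i, j) then 1 else 0 : ℕ) : ℤ) =
          (m' (t', j') : ℤ) + (if (t', j') = (i, j) then (1:ℤ) else 0) := by
      intro t' j'; split <;> simp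
    have hrow : ∑ j' ∈ Finset.range n,
        ((m' (t, j') + if (t, j') = (i, j) then 1 else 0 : ℕ) : ℤ) =
        (∑ j' ∈ Finset.range n, (m' (t, j') : ℤ)) + (if t = i then 1 else 0) := by
      simp only [rowcast]
      rw [Finset.sum_add_distrib]
      congr 1
      by_cases hti : t = i
      · subst hti
        have : ∀ j' : ℕ, ((t, j') = (t, j)) = (j' = j) := by
          intro j'; simp
        simp only [this]
        rw [hsumind _ j (fun _ => (1:ℤ))]
        simp [hjn]
      · rw [Finset.sum_eq_zero, if_neg hti]
        intro x hx
        rw [if_neg]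
        simp [Prod.ext_iff, hti]
    have hcol : ∑ j' ∈ Finset.range n,
        ((m' (j', t) + if (j', t) = (i, j) then 1 else 0 : ℕ) : ℤ) =
        (∑ j' ∈ Finset.range n, (m' (j', t) : ℤ)) + (if t = j then 1 else 0) := by
      simp only [rowcast]
      rw [Finset.sum_add_distrib]
      congr 1
      by_cases htj : t = j
      · subst htj
        have : ∀ j' : ℕ, ((j', t) = (i, t)) = (j' = i) := by
          intro j'; simp
        simp only [this]
        rw [hsumind _ i (fun _ => (1:ℤ))]
        simp [hin]
      · rw [Finset.sum_eq_zero, if_neg htj]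
        intro x hx
        rw [if_neg]
        simp [Prod.ext_iff, htj]
    rw [hrow, hcol]
    have hdiv' := hm'div t ht
    have hγt : γ t = γ' t + (if t = i then (1:ℤ) else 0) - (if t = j then 1 else 0) := by
      simp only [hγ']; ring
    rw [hγt, ← hdiv']
    ring

end StmtNine

/-- Non-vanishing theorem: `K_{Φ(η)}(γ|q) ≠ 0` if and only if `γ ∈ Y_η`,
i.e. for each `0 ≤ k ≤ p−1` and every subset `Ω` of the `(k+1)`-st block,
`Σ_{j ≤ r_k} γ_j + Σ_{a∈Ω} γ_a ≥ 0`. -/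
theorem stmt9 (η : List ℕ) (γ : ℕ → ℤ)
    (h0 : ∑ i ∈ Finset.range η.sum, γ i = 0) :
    (∃ d, KCoeff η γ d ≠ 0) ↔
      ∀ k < η.length, ∀ Ω ⊆ Finset.Ico (S η k) (S η (k + 1)),
        0 ≤ (∑ j ∈ Finset.range (S η k), γ j) + ∑ a ∈ Ω, γ a := by
  constructor
  · rintro ⟨d, hd⟩
    have hne : Nonempty {m : ℕ × ℕ → ℕ //
        (∀ p, p ∉ Phi η → m p = 0) ∧
        (∀ i ∈ Finset.range η.sum,
          (∑ j ∈ Finset.range η.sum, (m (i, j) : ℤ)) -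
            (∑ j ∈ Finset.range η.sum, (m (j, i) : ℤ)) = γ i) ∧
        (∑ p ∈ Phi η, m p) = d} := by
      by_contra h
      rw [not_nonempty_iff] at h
      exact hd (by rw [KCoeff]; exact Nat.card_of_isEmpty)
    obtain ⟨⟨m, hm0, hdiv, _⟩⟩ := hne
    exact forward η γ m hm0 hdiv
  · intro hY
    obtain ⟨m, hm0, hdiv⟩ := backward η _ γ rfl h0 hY
    refine ⟨∑ p ∈ Phi η, m p, ?_⟩
    rw [KCoeff, Nat.card_ne_zero]
    set d := ∑ p ∈ Phi η, m p with hd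
    refine ⟨⟨⟨m, hm0, hdiv, rfl⟩⟩, ?_⟩
    set T := {m' : ℕ × ℕ → ℕ //
        (∀ p, p ∉ Phi η → m' p = 0) ∧
        (∀ i ∈ Finset.range η.sum,
          (∑ j ∈ Finset.range η.sum, (m' (i, j) : ℤ)) -
            (∑ j ∈ Finset.range η.sum, (m' (j, i) : ℤ)) = γ i) ∧
        (∑ p ∈ Phi η, m' p) = d} with hT
    have hbound : ∀ (x : T) (q : ℕ × ℕ), q ∈ Phi η → x.1 q < d + 1 := by
      intro x q hq
      have h1 : x.1 q ≤ ∑ p ∈ Phi η, x.1 p :=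
        Finset.single_le_sum (fun p _ => Nat.zero_le (x.1 p)) hq
      have h2 := x.2.2.2
      omega
    set f : T → ({q : ℕ × ℕ // q ∈ Phi η} → Fin (d + 1)) :=
      fun x q => ⟨x.1 q.1, hbound x q.1 q.2⟩ with hf
    have hinj : Function.Injective f := by
      intro x y hxy
      apply Subtype.ext
      funext q
      by_cases hq : q ∈ Phi η
      · have := congrFun hxy ⟨q, hq⟩
        exact congrArg Fin.val this
      · rw [x.2.1 q hq, y.2.1 q hq]
    exact Finite.of_injective f hinj
end
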